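/- Suppose f : ℝ → L²(O; ℝ²) is locally square-integrable, f∞ ∈ L²(O; ℝ²), for every τ ∈ ℝ the integral ∫_{-∞}^{τ} ‖f(t) − f∞‖²_{L²(O)} dt is finite, and lim_{τ→−∞} ∫_{-∞}^{τ} ‖f(t) − f∞‖²_{L²(O)} dt = 0. Then the tails of f are backward-uniformly small: for every κ > 0 and every τ ∈ ℝ, lim_{k→+∞} sup_{s ≤ τ} ∫_{-∞}^{s} e^{κ(r−s)} ( ∫_{{x ∈ O : |x| ≥ k}} |f(x,r)|² dx ) dr = 0, where f(·,r) denotes (a representative of) the L² function f(r). -/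

import Mathlib

open MeasureTheory Filter Topology

section AuxLemmas
open Set Real

lemma aux_antitone_tendsto (g : ℝ → ENNReal) (hg : Antitone g)
    (h : Tendsto (fun n : ℕ => g n) atTop (nhds 0)) : Tendsto g atTop (nhds 0) := by
  rw [ENNReal.tendsto_nhds_zero] at h ⊢
  intro ε hε
  obtain ⟨N, hN⟩ := eventually_atTop.1 (h ε hε)
  filter_upwards [eventually_ge_atTop (N : ℝ)] with k hk
  exact le_trans (hg hk) (hN N le_rfl)

lemma aux_tail_tendsto {E : Type*} [NormedAddCommGroup E] [MeasurableSpace E]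
    [OpensMeasurableSpace E] (μ : Measure E) (F : E → ENNReal) (hF : AEMeasurable F μ)
    (hfin : ∫⁻ x, F x ∂μ ≠ ⊤) :
    Tendsto (fun k : ℝ => ∫⁻ x in {x | k ≤ ‖x‖}, F x ∂μ) atTop (nhds 0) := by
  have hS : ∀ k : ℝ, MeasurableSet {x : E | k ≤ ‖x‖} := fun k =>
    measurableSet_le measurable_const measurable_norm
  apply aux_antitone_tendsto
  · intro a b hab
    exact lintegral_mono_set (fun x hx => le_trans hab hx)
  · have h0 : Tendsto (fun n : ℕ => ∫⁻ x, ({x : E | (n : ℝ) ≤ ‖x‖}).indicator F x ∂μ)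
        atTop (nhds (∫⁻ _x, (0 : ENNReal) ∂μ)) := by
      apply tendsto_lintegral_of_dominated_convergence' F
        (fun n => hF.indicator (hS _))
        (fun n => Filter.Eventually.of_forall fun x => Set.indicator_le_self _ _ x) hfin ?_
      filter_upwards with x
      apply tendsto_const_nhds.congr'
      filter_upwards [eventually_gt_atTop ⌈‖x‖⌉₊] with n hn
      rw [Set.indicator_of_notMem]
      simp only [Set.mem_setOf_eq, not_le]
      calc ‖x‖ ≤ ⌈‖x‖⌉₊ := Nat.le_ceil _
      _ < n := by exact_mod_cast hn
    simp only [lintegral_zero] at h0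
    simpa only [lintegral_indicator (hS _) F] using h0

lemma aux_sq_bound {E : Type*} [NormedAddCommGroup E] (a b : E) :
    (‖a‖₊ : ENNReal) ^ 2 ≤ 2 * (‖a - b‖₊ : ENNReal) ^ 2 + 2 * (‖b‖₊ : ENNReal) ^ 2 := by
  have h1 : ‖a‖ ≤ ‖a - b‖ + ‖b‖ := by simpa using norm_add_le (a - b) b
  have h : ‖a‖ ^ 2 ≤ 2 * ‖a - b‖ ^ 2 + 2 * ‖b‖ ^ 2 := by
    nlinarith [sq_nonneg (‖a - b‖ - ‖b‖), norm_nonneg a, norm_nonneg (a - b), norm_nonneg b]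
  calc (‖a‖₊ : ENNReal) ^ 2 = ENNReal.ofReal (‖a‖ ^ 2) := by
        rw [← enorm_eq_nnnorm, ← ofReal_norm, ← ENNReal.ofReal_pow (norm_nonneg _)]
    _ ≤ ENNReal.ofReal (2 * ‖a - b‖ ^ 2 + 2 * ‖b‖ ^ 2) := ENNReal.ofReal_le_ofReal h
    _ ≤ 2 * (‖a - b‖₊ : ENNReal) ^ 2 + 2 * (‖b‖₊ : ENNReal) ^ 2 := by
        have hcoe : ∀ y : E, ENNReal.ofReal (‖y‖ ^ 2) = (‖y‖₊ : ENNReal) ^ 2 := fun y => by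
          rw [← enorm_eq_nnnorm, ← ofReal_norm, ← ENNReal.ofReal_pow (norm_nonneg _)]
        rw [ENNReal.ofReal_add (by positivity) (by positivity),
          ENNReal.ofReal_mul (by norm_num), ENNReal.ofReal_mul (by norm_num),
          hcoe, hcoe]
        simp [ENNReal.ofReal_ofNat]

lemma aux_L2 {α : Type*} [MeasurableSpace α] {μ : Measure α} {E : Type*} [NormedAddCommGroup E]
    (g : Lp E 2 μ) : ∫⁻ x, (‖g x‖₊ : ENNReal) ^ 2 ∂μ = ENNReal.ofReal (‖g‖ ^ 2) := by
  have h := eLpNorm_eq_lintegral_rpow_enorm_toReal (f := (g : α → E)) (μ := μ) (p := 2)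
    (by norm_num) (by norm_num)
  rw [ENNReal.toReal_ofNat] at h
  simp only [enorm_eq_nnnorm] at h
  have hne : eLpNorm (g : α → E) 2 μ ≠ ⊤ := Lp.eLpNorm_ne_top g
  have hint : ∫⁻ x, (‖g x‖₊ : ENNReal) ^ (2 : ℝ) ∂μ = eLpNorm (g : α → E) 2 μ ^ (2 : ℝ) := by
    rw [h, ← ENNReal.rpow_mul]
    norm_num
  have hconv : ∀ y : ENNReal, y ^ (2 : ℝ) = y ^ (2 : ℕ) := fun y => by
    rw [← ENNReal.rpow_natCast]; norm_num
  simp only [← hconv]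
  rw [hint, Lp.norm_def, ENNReal.ofReal_pow ENNReal.toReal_nonneg,
    ENNReal.ofReal_toReal hne, hconv]


lemma aux_exp_lintegral {κ : ℝ} (hκ : 0 < κ) (s : ℝ) :
    ∫⁻ r in Set.Iic s, ENNReal.ofReal (Real.exp (κ * (r - s))) = ENNReal.ofReal (1 / κ) := by
  have hint : IntegrableOn (fun r => Real.exp (κ * (r - s))) (Set.Iic s) := by
    rw [← (Measure.measurePreserving_neg (volume : Measure ℝ)).integrableOn_comp_preimage
        (Homeomorph.neg ℝ).measurableEmbedding]
    simp only [Function.comp_def, neg_preimage, neg_Iic]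
    rw [integrableOn_Ici_iff_integrableOn_Ioi]
    have heq : ∀ x : ℝ, Real.exp (κ * (-x - s)) = Real.exp (-κ * s) * Real.exp (-κ * x) := by
      intro x; rw [← Real.exp_add]; ring_nf
    simp_rw [heq]
    exact (exp_neg_integrableOn_Ioi _ hκ).const_mul _
  have hval : ∫ r in Set.Iic s, Real.exp (κ * (r - s)) = 1 / κ := by
    have hderiv : ∀ x ∈ Set.Iic s,
        HasDerivAt (fun r => Real.exp (κ * (r - s)) / κ) (Real.exp (κ * (x - s))) x := by
      intro x _
      have h1 : HasDerivAt (fun r : ℝ => κ * (r - s)) κ x := by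
        simpa using ((hasDerivAt_id x).sub_const s).const_mul κ
      have h2 := (Real.hasDerivAt_exp (κ * (x - s))).comp x h1
      have h3 := h2.div_const κ
      simpa [mul_comm, mul_div_assoc, mul_div_cancel_right₀, hκ.ne'] using h3
    have hlim : Tendsto (fun r => Real.exp (κ * (r - s)) / κ) atBot (nhds 0) := by
      have h1 : Tendsto (fun r : ℝ => κ * (r - s)) atBot atBot := by
        apply Tendsto.const_mul_atBot hκ
        simpa [sub_eq_add_neg] using tendsto_atBot_add_const_right atBot (-s) tendsto_id
      have h2 := (Real.tendsto_exp_atBot.comp h1).div_const κ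
      simpa using h2
    have := integral_Iic_of_hasDerivAt_of_tendsto' hderiv hint hlim
    rw [this]
    simp [Real.exp_zero]
  rw [← ofReal_integral_eq_lintegral_ofReal hint
    (Filter.Eventually.of_forall fun x => (Real.exp_pos _).le), hval]

noncomputable def tailFn (μ : Measure (EuclideanSpace ℝ (Fin 2))) (k : ℝ)
    (g : Lp (EuclideanSpace ℝ (Fin 2)) 2 μ) : ENNReal :=
  ∫⁻ x in {x : EuclideanSpace ℝ (Fin 2) | k ≤ ‖x‖}, (‖g x‖₊ : ENNReal) ^ 2 ∂μ

lemma tailFn_le (μ : Measure (EuclideanSpace ℝ (Fin 2))) (k : ℝ)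
    (g : Lp (EuclideanSpace ℝ (Fin 2)) 2 μ) : tailFn μ k g ≤ ENNReal.ofReal (‖g‖ ^ 2) := by
  rw [← aux_L2 g]
  exact setLIntegral_le_lintegral _ _

lemma tailFn_tendsto (μ : Measure (EuclideanSpace ℝ (Fin 2)))
    (g : Lp (EuclideanSpace ℝ (Fin 2)) 2 μ) :
    Tendsto (fun k : ℝ => tailFn μ k g) atTop (nhds 0) := by
  apply aux_tail_tendsto μ (fun x => (‖g x‖₊ : ENNReal) ^ 2) ((Lp.aestronglyMeasurable g).enorm.pow_const 2)
  rw [aux_L2 g]; exact ENNReal.ofReal_ne_top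

lemma tailFn_meas (μ : Measure (EuclideanSpace ℝ (Fin 2))) [SFinite μ]
    (f : ℝ → Lp (EuclideanSpace ℝ (Fin 2)) 2 μ)
    (hmeas : Measurable fun p : ℝ × EuclideanSpace ℝ (Fin 2) => f p.1 p.2) (k : ℝ) :
    Measurable fun r => tailFn μ k (f r) := by
  have hS : MeasurableSet {x : EuclideanSpace ℝ (Fin 2) | k ≤ ‖x‖} :=
    measurableSet_le measurable_const measurable_norm
  have heq : ∀ r, tailFn μ k (f r) =
      ∫⁻ x, ({x : EuclideanSpace ℝ (Fin 2) | k ≤ ‖x‖}).indicator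
        (fun x => (‖f r x‖₊ : ENNReal) ^ 2) x ∂μ := by
    intro r; rw [tailFn, lintegral_indicator hS]
  simp_rw [heq]
  apply Measurable.lintegral_prod_right'
    (f := fun p : ℝ × EuclideanSpace ℝ (Fin 2) =>
      ({x : EuclideanSpace ℝ (Fin 2) | k ≤ ‖x‖}).indicator
        (fun x => (‖f p.1 x‖₊ : ENNReal) ^ 2) p.2)
  simp only [Set.indicator_apply, Set.mem_setOf_eq]
  exact Measurable.ite (measurableSet_le measurable_const measurable_snd.norm)
    (hmeas.enorm.pow_const 2) measurable_const

lemma tailFn_key (μ : Measure (EuclideanSpace ℝ (Fin 2))) (k : ℝ)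
    (a b : Lp (EuclideanSpace ℝ (Fin 2)) 2 μ) :
    tailFn μ k a ≤ 2 * ENNReal.ofReal (‖a - b‖ ^ 2) + 2 * tailFn μ k b := by
  have hae : ∀ᵐ x ∂μ, (‖a x‖₊ : ENNReal) ^ 2 ≤
      2 * (‖(a - b : Lp _ 2 μ) x‖₊ : ENNReal) ^ 2 + 2 * (‖b x‖₊ : ENNReal) ^ 2 := by
    filter_upwards [Lp.coeFn_sub a b] with x hx
    rw [hx, Pi.sub_apply]
    exact aux_sq_bound _ _
  calc tailFn μ k a
      ≤ ∫⁻ x in {x : EuclideanSpace ℝ (Fin 2) | k ≤ ‖x‖},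
          (2 * (‖(a - b : Lp _ 2 μ) x‖₊ : ENNReal) ^ 2 + 2 * (‖b x‖₊ : ENNReal) ^ 2) ∂μ :=
        lintegral_mono_ae (ae_restrict_of_ae hae)
    _ = (∫⁻ x in {x : EuclideanSpace ℝ (Fin 2) | k ≤ ‖x‖},
          2 * (‖(a - b : Lp _ 2 μ) x‖₊ : ENNReal) ^ 2 ∂μ)
        + ∫⁻ x in {x : EuclideanSpace ℝ (Fin 2) | k ≤ ‖x‖},
          2 * (‖b x‖₊ : ENNReal) ^ 2 ∂μ := by
        apply lintegral_add_left'
        exact (((Lp.aestronglyMeasurable (a - b)).enorm.pow_const 2).const_mul 2).restrict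
    _ ≤ (∫⁻ x, 2 * (‖(a - b : Lp _ 2 μ) x‖₊ : ENNReal) ^ 2 ∂μ) + 2 * tailFn μ k b := by
        apply add_le_add (setLIntegral_le_lintegral _ _)
        rw [tailFn, lintegral_const_mul' 2 _ (by norm_num)]
    _ = 2 * ENNReal.ofReal (‖a - b‖ ^ 2) + 2 * tailFn μ k b := by
        rw [lintegral_const_mul' 2 _ (by norm_num), aux_L2 (a - b)]


end AuxLemmas

set_option maxHeartbeats 2000000 in
open Set Real in
/-- If `f : ℝ → L²(O; ℝ²)` is locally square-integrable and converges
backward to `f∞ ∈ L²(O; ℝ²)` in the sense that `∫_{-∞}^{τ} ‖f(t) − f∞‖² dt` is finite for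
every `τ` and tends to `0` as `τ → −∞`, then the tails of `f` are backward-uniformly small:
for every `κ > 0` and `τ ∈ ℝ`,
`lim_{k→∞} sup_{s ≤ τ} ∫_{-∞}^{s} e^{κ(r−s)} ∫_{{x ∈ O : |x| ≥ k}} |f(x,r)|² dx dr = 0`. -/
theorem statement1
    (O : Set (EuclideanSpace ℝ (Fin 2))) (hO : IsOpen O)
    (f : ℝ → Lp (EuclideanSpace ℝ (Fin 2)) 2 (volume.restrict O))
    (f_inf : Lp (EuclideanSpace ℝ (Fin 2)) 2 (volume.restrict O))
    (hmeas : Measurable fun p : ℝ × EuclideanSpace ℝ (Fin 2) => f p.1 p.2)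
    (hmeas' : Measurable fun t => ‖f t - f_inf‖)
    (hloc : ∀ a b : ℝ, IntegrableOn (fun t => ‖f t‖ ^ 2) (Set.Icc a b))
    (hfin : ∀ τ : ℝ, ∫⁻ t in Set.Iic τ, ENNReal.ofReal (‖f t - f_inf‖ ^ 2) < ⊤)
    (hconv : Tendsto (fun τ : ℝ => ∫⁻ t in Set.Iic τ, ENNReal.ofReal (‖f t - f_inf‖ ^ 2))
      atBot (nhds 0)) :
    ∀ κ > (0 : ℝ), ∀ τ : ℝ,
      Tendsto (fun k : ℝ =>
          ⨆ s ∈ Set.Iic τ,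
            ∫⁻ r in Set.Iic s,
              ENNReal.ofReal (Real.exp (κ * (r - s))) *
                ∫⁻ x in {x : EuclideanSpace ℝ (Fin 2) | k ≤ ‖x‖},
                  (‖f r x‖₊ : ENNReal) ^ 2 ∂(volume.restrict O))
        atTop (nhds 0) := by
  intro κ hκ τ
  show Tendsto (fun k : ℝ =>
      ⨆ s ∈ Set.Iic τ, ∫⁻ r in Set.Iic s,
        ENNReal.ofReal (Real.exp (κ * (r - s))) * tailFn (volume.restrict O) k (f r))
    atTop (nhds 0)
  rw [ENNReal.tendsto_nhds_zero]
  intro ε hε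
  set δ := min ε 1 with hδdef
  have hδpos : (0 : ENNReal) < δ := lt_min hε zero_lt_one
  have hδle : δ ≤ ε := min_le_left _ _
  have h8 : (0 : ENNReal) < δ / 8 := ENNReal.div_pos hδpos.ne' (by norm_num)
  obtain ⟨T, hT⟩ : ∃ T : ℝ,
      (∫⁻ t in Set.Iic T, ENNReal.ofReal (‖f t - f_inf‖ ^ 2)) ≤ δ / 8 :=
    (ENNReal.tendsto_nhds_zero.mp hconv (δ / 8) h8).exists
  -- B k tends to zero
  have hB : Tendsto (fun k : ℝ => ∫⁻ r in Set.Ioc T τ, tailFn (volume.restrict O) k (f r)) atTop (nhds 0) := by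
    apply aux_antitone_tendsto
    · intro a b hab
      exact lintegral_mono fun r => lintegral_mono_set (fun x hx => le_trans hab hx)
    · have hbd : ∫⁻ r in Set.Ioc T τ, ENNReal.ofReal (‖f r‖ ^ 2) ≠ ⊤ := by
        refine ne_of_lt (lt_of_le_of_lt (lintegral_mono_set Set.Ioc_subset_Icc_self) ?_)
        exact (hloc T τ).lintegral_lt_top
      have h0 : Tendsto (fun n : ℕ => ∫⁻ r in Set.Ioc T τ, tailFn (volume.restrict O) (n : ℝ) (f r)) atTop
          (nhds (∫⁻ _r in Set.Ioc T τ, (0 : ENNReal))) := by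
        apply tendsto_lintegral_of_dominated_convergence' (fun r => ENNReal.ofReal (‖f r‖ ^ 2))
          (fun n => ((tailFn_meas (volume.restrict O) f hmeas _).aemeasurable).restrict)
          (fun n => Filter.Eventually.of_forall fun r => tailFn_le _ _ _) hbd
        filter_upwards with r
        exact (tailFn_tendsto (volume.restrict O) (f r)).comp tendsto_natCast_atTop_atTop
      simpa using h0
  -- third term tends to zero
  have hC : Tendsto (fun k : ℝ => ENNReal.ofReal (1 / κ) * (2 * tailFn (volume.restrict O) k f_inf))
      atTop (nhds 0) := by
    have h1 : Tendsto (fun k : ℝ => 2 * tailFn (volume.restrict O) k f_inf) atTop (nhds 0) := by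
      simpa using ENNReal.Tendsto.const_mul (tailFn_tendsto (volume.restrict O) f_inf) (Or.inr (by norm_num))
    simpa using ENNReal.Tendsto.const_mul h1 (Or.inr ENNReal.ofReal_ne_top)
  -- main estimate
  have hmain : ∀ k : ℝ,
      (⨆ s ∈ Set.Iic τ, ∫⁻ r in Set.Iic s,
          ENNReal.ofReal (Real.exp (κ * (r - s))) * tailFn (volume.restrict O) k (f r)) ≤
        2 * (δ / 8) + (∫⁻ r in Set.Ioc T τ, tailFn (volume.restrict O) k (f r))
          + ENNReal.ofReal (1 / κ) * (2 * tailFn (volume.restrict O) k f_inf) := by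
    intro k
    apply iSup₂_le
    intro s hs
    simp only [Set.mem_Iic] at hs
    set g1 : ℝ → ENNReal :=
      (Set.Iic T).indicator (fun r => 2 * ENNReal.ofReal (‖f r - f_inf‖ ^ 2)) with hg1def
    set g2 : ℝ → ENNReal := (Set.Ioc T τ).indicator (fun r => tailFn (volume.restrict O) k (f r)) with hg2def
    set g3 : ℝ → ENNReal :=
      fun r => ENNReal.ofReal (Real.exp (κ * (r - s))) * (2 * tailFn (volume.restrict O) k f_inf) with hg3def
    have hg1m : Measurable g1 :=
      (((hmeas'.pow_const 2).ennreal_ofReal).const_mul 2).indicator measurableSet_Iic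
    have hg2m : Measurable g2 := (tailFn_meas (volume.restrict O) f hmeas k).indicator measurableSet_Ioc
    have hg3m : Measurable g3 :=
      (((measurable_id.sub_const s).const_mul κ).exp.ennreal_ofReal).mul_const _
    have hptwise : ∀ r ∈ Set.Iic s,
        ENNReal.ofReal (Real.exp (κ * (r - s))) * tailFn (volume.restrict O) k (f r) ≤ g1 r + g2 r + g3 r := by
      intro r hr
      simp only [Set.mem_Iic] at hr
      have he1 : ENNReal.ofReal (Real.exp (κ * (r - s))) ≤ 1 := by
        rw [← ENNReal.ofReal_one]
        apply ENNReal.ofReal_le_ofReal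
        rw [Real.exp_le_one_iff]
        exact mul_nonpos_of_nonneg_of_nonpos hκ.le (sub_nonpos.2 hr)
      by_cases hrT : r ≤ T
      · calc ENNReal.ofReal (Real.exp (κ * (r - s))) * tailFn (volume.restrict O) k (f r)
            ≤ ENNReal.ofReal (Real.exp (κ * (r - s))) *
              (2 * ENNReal.ofReal (‖f r - f_inf‖ ^ 2) + 2 * tailFn (volume.restrict O) k f_inf) :=
              mul_le_mul_right (tailFn_key (volume.restrict O) k (f r) f_inf) _
          _ = ENNReal.ofReal (Real.exp (κ * (r - s)))
                * (2 * ENNReal.ofReal (‖f r - f_inf‖ ^ 2))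
              + g3 r := by rw [mul_add]
          _ ≤ 1 * (2 * ENNReal.ofReal (‖f r - f_inf‖ ^ 2)) + g3 r :=
              add_le_add_left (mul_le_mul_left he1 _) _
          _ = g1 r + g3 r := by rw [one_mul, hg1def, Set.indicator_of_mem (Set.mem_Iic.mpr hrT)]
          _ ≤ g1 r + g2 r + g3 r := add_le_add_left (le_add_right le_rfl) _
      · have hmem : r ∈ Set.Ioc T τ := ⟨not_le.1 hrT, hr.trans hs⟩
        calc ENNReal.ofReal (Real.exp (κ * (r - s))) * tailFn (volume.restrict O) k (f r)
            ≤ 1 * tailFn (volume.restrict O) k (f r) := mul_le_mul_left he1 _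
          _ = g2 r := by rw [one_mul, hg2def, Set.indicator_of_mem hmem]
          _ ≤ g1 r + g2 r + g3 r := le_add_right (le_add_left le_rfl)
    calc ∫⁻ r in Set.Iic s, ENNReal.ofReal (Real.exp (κ * (r - s))) * tailFn (volume.restrict O) k (f r)
        ≤ ∫⁻ r in Set.Iic s, (g1 r + g2 r + g3 r) :=
          setLIntegral_mono ((hg1m.add hg2m).add hg3m) hptwise
      _ = (∫⁻ r in Set.Iic s, g1 r) + (∫⁻ r in Set.Iic s, g2 r) + ∫⁻ r in Set.Iic s, g3 r := by
          rw [lintegral_add_right _ hg3m, lintegral_add_right _ hg2m]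
      _ ≤ 2 * (δ / 8) + (∫⁻ r in Set.Ioc T τ, tailFn (volume.restrict O) k (f r))
          + ENNReal.ofReal (1 / κ) * (2 * tailFn (volume.restrict O) k f_inf) := by
          gcongr ?_ + ?_ + ?_
          · calc ∫⁻ r in Set.Iic s, g1 r ≤ ∫⁻ r, g1 r := setLIntegral_le_lintegral _ _
              _ = ∫⁻ r in Set.Iic T, 2 * ENNReal.ofReal (‖f r - f_inf‖ ^ 2) := by
                  rw [hg1def, lintegral_indicator measurableSet_Iic]
              _ = 2 * ∫⁻ r in Set.Iic T, ENNReal.ofReal (‖f r - f_inf‖ ^ 2) :=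
                  lintegral_const_mul' 2 _ (by norm_num)
              _ ≤ 2 * (δ / 8) := mul_le_mul_right hT _
          · calc ∫⁻ r in Set.Iic s, g2 r ≤ ∫⁻ r, g2 r := setLIntegral_le_lintegral _ _
              _ = ∫⁻ r in Set.Ioc T τ, tailFn (volume.restrict O) k (f r) := by
                  rw [hg2def, lintegral_indicator measurableSet_Ioc]
          · apply le_of_eq
            calc ∫⁻ r in Set.Iic s, g3 r
                = (∫⁻ r in Set.Iic s, ENNReal.ofReal (Real.exp (κ * (r - s))))
                    * (2 * tailFn (volume.restrict O) k f_inf) := by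
                  rw [hg3def]
                  exact lintegral_mul_const _
                    (((measurable_id.sub_const s).const_mul κ).exp.ennreal_ofReal)
              _ = ENNReal.ofReal (1 / κ) * (2 * tailFn (volume.restrict O) k f_inf) := by
                  rw [aux_exp_lintegral hκ s]
  -- conclude
  have hBev := ENNReal.tendsto_nhds_zero.mp hB (δ / 8) h8
  have hCev := ENNReal.tendsto_nhds_zero.mp hC (δ / 8) h8
  filter_upwards [hBev, hCev] with k hk1 hk2
  calc (⨆ s ∈ Set.Iic τ, ∫⁻ r in Set.Iic s,
          ENNReal.ofReal (Real.exp (κ * (r - s))) * tailFn (volume.restrict O) k (f r))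
      ≤ 2 * (δ / 8) + (∫⁻ r in Set.Ioc T τ, tailFn (volume.restrict O) k (f r))
        + ENNReal.ofReal (1 / κ) * (2 * tailFn (volume.restrict O) k f_inf) := hmain k
    _ ≤ 2 * (δ / 8) + δ / 8 + δ / 8 := by gcongr
    _ = 4 * (δ / 8) := by ring
    _ ≤ 8 * (δ / 8) := by gcongr <;> norm_num
    _ ≤ δ := ENNReal.mul_div_le
    _ ≤ ε := hδle
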